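/- Let X be a regular CW complex with cellular boundary ∂σ = Σ_{τ ⊲ σ} ε(τ,σ) τ over ℤ (codimension-1 faces τ of σ, incidence signs ε(τ,σ) = ±1). Define sd(σ) = Σ over maximal chains τ_0 ⊲ τ_1 ⊲ ⋯ ⊲ τ_d = σ of the product ε(τ_0,τ_1)⋯ε(τ_{d−1},τ_d) times the simplex (τ_0 < ⋯ < τ_d) in the simplicial chains of the nerve of the face poset. Working over 𝔽₂ (so signs are 1), sd is a chain map: sd ∘ ∂ = ∂ ∘ sd, where the simplicial boundary of a chain omits each element of the chain in turn. -/

import Mathlib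

noncomputable section

/-- The cellular boundary over `𝔽₂` of the free module on a finite poset of cells with
covering relation `cov`: `∂σ = Σ_{τ ⋖ σ} τ`. -/
def bdryCell {Q : Type} [Fintype Q] [DecidableEq Q] (cov : Q → Q → Prop)
    [DecidableRel cov] (x : Q →₀ ZMod 2) : Q →₀ ZMod 2 :=
  x.sum fun σ r => r • ∑ τ : Q, if cov τ σ then Finsupp.single τ (1 : ZMod 2) else 0

/-- The simplicial boundary on chains of the order complex (nerve), a chain being
recorded as a list: each element is omitted in turn; length-one lists (vertices) have
boundary `0` in the non-augmented setting. -/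
def bdryChain {Q : Type} [DecidableEq Q] (x : List Q →₀ ZMod 2) : List Q →₀ ZMod 2 :=
  x.sum fun l r =>
    if l.length ≤ 1 then 0
    else r • ∑ i ∈ Finset.range l.length, Finsupp.single (l.eraseIdx i) (1 : ZMod 2)

/-- The subdivision of a cell `σ` (over `𝔽₂`): the sum of all maximal chains
`τ₀ ⋖ τ₁ ⋖ ⋯ ⋖ τ_d = σ` starting at a cell of dimension `0` and ending at `σ`. -/
def sdOf {Q : Type} [Fintype Q] [DecidableEq Q] (cov : Q → Q → Prop) [DecidableRel cov]
    (dim : Q → ℕ) (σ : Q) : List Q →₀ ZMod 2 :=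
  ∑ f : Fin (dim σ + 1) → Q,
    if (List.ofFn f).IsChain cov ∧ f ⟨dim σ, Nat.lt_succ_self _⟩ = σ ∧ dim (f 0) = 0
    then Finsupp.single (List.ofFn f) (1 : ZMod 2) else 0

/-- The linear extension of the subdivision map. -/
def sdMap {Q : Type} [Fintype Q] [DecidableEq Q] (cov : Q → Q → Prop) [DecidableRel cov]
    (dim : Q → ℕ) (x : Q →₀ ZMod 2) : List Q →₀ ZMod 2 :=
  x.sum fun σ r => r • sdOf cov dim σ

set_option linter.unusedSectionVars false
set_option linter.unnecessarySimpa false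

section Aux

variable {Q : Type} [Fintype Q] [DecidableEq Q] (cov : Q → Q → Prop) [DecidableRel cov]
  (dim : Q → ℕ)

lemma bdryCell_add (x y : Q →₀ ZMod 2) :
    bdryCell cov (x + y) = bdryCell cov x + bdryCell cov y :=
  Finsupp.sum_add_index' (fun _ => zero_smul _ _) (fun _ b c => add_smul b c _)

lemma sdMap_add (x y : Q →₀ ZMod 2) :
    sdMap cov dim (x + y) = sdMap cov dim x + sdMap cov dim y :=
  Finsupp.sum_add_index' (fun _ => zero_smul _ _) (fun _ b c => add_smul b c _)

lemma bdryChain_add (x y : List Q →₀ ZMod 2) :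
    bdryChain (x + y) = bdryChain x + bdryChain y :=
  Finsupp.sum_add_index' (fun l => by split <;> simp)
    (fun l b c => by split <;> simp [add_smul])

lemma bdryCell_zero : bdryCell cov (0 : Q →₀ ZMod 2) = 0 := Finsupp.sum_zero_index

lemma sdMap_zero : sdMap cov dim (0 : Q →₀ ZMod 2) = 0 := Finsupp.sum_zero_index

lemma bdryChain_zero : bdryChain (0 : List Q →₀ ZMod 2) = 0 := Finsupp.sum_zero_index

lemma sdMap_sum {ι : Type*} (s : Finset ι) (g : ι → (Q →₀ ZMod 2)) :
    sdMap cov dim (∑ i ∈ s, g i) = ∑ i ∈ s, sdMap cov dim (g i) :=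
  map_sum (AddMonoidHom.mk' (sdMap cov dim) (sdMap_add cov dim)) g s

lemma bdryChain_sum {ι : Type*} (s : Finset ι) (g : ι → (List Q →₀ ZMod 2)) :
    bdryChain (∑ i ∈ s, g i) = ∑ i ∈ s, bdryChain (g i) :=
  map_sum (AddMonoidHom.mk' bdryChain (bdryChain_add)) g s

lemma sdMap_single (σ : Q) : sdMap cov dim (Finsupp.single σ 1) = sdOf cov dim σ := by
  rw [sdMap]
  exact (Finsupp.sum_single_index (h := fun σ r => r • sdOf cov dim σ)
    (zero_smul _ _)).trans (one_smul _ _)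

lemma bdryCell_single (σ : Q) :
    bdryCell cov (Finsupp.single σ 1) =
      ∑ τ : Q, if cov τ σ then Finsupp.single τ (1 : ZMod 2) else 0 := by
  rw [bdryCell]
  exact (Finsupp.sum_single_index
    (h := fun σ' r => r • ∑ τ : Q, if cov τ σ' then Finsupp.single τ (1 : ZMod 2) else 0)
    (zero_smul _ _)).trans (one_smul _ _)

lemma bdryChain_single (l : List Q) :
    bdryChain (Finsupp.single l (1 : ZMod 2)) =
      if l.length ≤ 1 then 0
      else ∑ i ∈ Finset.range l.length, Finsupp.single (l.eraseIdx i) (1 : ZMod 2) := by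
  rw [bdryChain]
  exact (Finsupp.sum_single_index
    (h := fun (l : List Q) (r : ZMod 2) => if l.length ≤ 1 then 0
      else r • ∑ i ∈ Finset.range l.length, Finsupp.single (l.eraseIdx i) (1 : ZMod 2))
    (by simp)).trans (by beta_reduce; split <;> simp)

lemma sdOf_cast (σ : Q) (n : ℕ) (h : dim σ = n) :
    sdOf cov dim σ = ∑ f : Fin (n + 1) → Q,
      if (List.ofFn f).IsChain cov ∧ f (Fin.last n) = σ ∧ dim (f 0) = 0
      then Finsupp.single (List.ofFn f) (1 : ZMod 2) else 0 := by
  subst h; rfl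

lemma eraseIdx_ofFn {n : ℕ} (f : Fin (n + 1) → Q) (p : Fin (n + 1)) :
    (List.ofFn f).eraseIdx ↑p = List.ofFn (p.removeNth f) := by
  apply List.ext_getElem
  · simp [List.length_eraseIdx, p.isLt]
  · intro j h1 h2
    have hj : j < n := by simpa using h2
    rw [show (List.ofFn (p.removeNth f))[j]'h2 = f (p.succAbove ⟨j, hj⟩) from by
      rw [List.getElem_ofFn]; rfl]
    rw [List.getElem_eraseIdx]
    split
    · next h' =>
      rw [List.getElem_ofFn, Fin.succAbove_of_castSucc_lt p ⟨j, hj⟩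
        (by simpa [Fin.lt_def] using h')]
      rfl
    · next h' =>
      rw [List.getElem_ofFn, Fin.succAbove_of_le_castSucc p ⟨j, hj⟩
        (by simp only [Fin.le_def, Fin.coe_castSucc]; omega)]
      rfl

lemma chain'_ofFn_iff {n : ℕ} (f : Fin (n + 1) → Q) :
    (List.ofFn f).IsChain cov ↔
      ∀ (j : ℕ) (h : j < n), cov (f ⟨j, by omega⟩) (f ⟨j + 1, by omega⟩) := by
  rw [List.isChain_iff_getElem]
  simp only [List.get_eq_getElem, List.getElem_ofFn, List.length_ofFn]
  constructor
  · intro H j hj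
    exact H j (by omega)
  · intro H j hj
    exact H j (by omega)

lemma dim_chain {n : ℕ} (hgrade : ∀ τ σ, cov τ σ → dim σ = dim τ + 1)
    (f : Fin (n + 1) → Q) (hc : (List.ofFn f).IsChain cov) (h0 : dim (f 0) = 0) :
    ∀ (j : ℕ) (h : j < n + 1), dim (f ⟨j, h⟩) = j := by
  intro j
  induction j with
  | zero => intro h; exact h0
  | succ k ih =>
    intro h
    have hk : k < n := by omega
    have hcv := (chain'_ofFn_iff cov f).1 hc k hk
    rw [hgrade _ _ hcv, ih (by omega)]

end Aux

section Main

variable {Q : Type} [Fintype Q] [DecidableEq Q] (cov : Q → Q → Prop) [DecidableRel cov]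
  (dim : Q → ℕ)

/-- The fiber of erasing the `p`-th entry over a fixed gapped chain has exactly two
elements. -/
lemma fiber_card (hgrade : ∀ τ σ, cov τ σ → dim σ = dim τ + 1)
    (hdiamond : ∀ τ σ, Relation.TransGen cov τ σ → dim σ = dim τ + 2 →
        Nat.card {γ : Q // cov τ γ ∧ cov γ σ} = 2)
    (hdiamond0 : ∀ σ, dim σ = 1 → Nat.card {γ : Q // cov γ σ} = 2)
    {n : ℕ} (σ : Q) (p : Fin (n + 1)) (hp : (p : ℕ) < n) (y : Fin n → Q)
    (f₀ : Fin (n + 1) → Q)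
    (hf₀ : ((List.ofFn f₀).IsChain cov ∧ f₀ (Fin.last n) = σ ∧ dim (f₀ 0) = 0) ∧
      p.removeNth f₀ = y) :
    (Finset.univ.filter fun f : Fin (n + 1) → Q =>
      ((List.ofFn f).IsChain cov ∧ f (Fin.last n) = σ ∧ dim (f 0) = 0) ∧
        p.removeNth f = y).card = 2 := by
  classical
  obtain ⟨⟨hc₀, hl₀, h0₀⟩, hy₀⟩ := hf₀
  have hdim : ∀ (j : ℕ) (h : j < n + 1), dim (f₀ ⟨j, h⟩) = j :=
    dim_chain cov dim hgrade f₀ hc₀ h0₀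
  have hagree : ∀ (γ : Q) (q : Fin (n + 1)), q ≠ p →
      Fin.insertNth (α := fun _ => Q) p γ y q = f₀ q := by
    intro γ q hq
    obtain ⟨j, rfl⟩ := Fin.exists_succAbove_eq hq
    rw [Fin.insertNth_apply_succAbove, ← hy₀]
    rfl
  have hins : ∀ g : Fin (n + 1) → Q, p.removeNth g = y →
      Fin.insertNth (α := fun _ => Q) p (g p) y = g := by
    intro g hg
    funext q
    by_cases hq : q = p
    · rw [hq]
      exact Fin.insertNth_apply_same (α := fun _ => Q) p _ y
    · obtain ⟨j, rfl⟩ := Fin.exists_succAbove_eq hq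
      rw [Fin.insertNth_apply_succAbove, ← hg]
      rfl
  have e1 : {f : Fin (n + 1) → Q //
      (((List.ofFn f).IsChain cov ∧ f (Fin.last n) = σ ∧ dim (f 0) = 0) ∧
        p.removeNth f = y)}
      ≃ {γ : Q // (List.ofFn (Fin.insertNth (α := fun _ => Q) p γ y)).IsChain cov ∧
          (Fin.insertNth (α := fun _ => Q) p γ y) (Fin.last n) = σ ∧ dim ((Fin.insertNth (α := fun _ => Q) p γ y) 0) = 0} :=
    { toFun := fun x => ⟨x.1 p, by
        have h := hins x.1 x.2.2
        show (List.ofFn (Fin.insertNth (α := fun _ => Q) p (x.1 p) y)).IsChain cov ∧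
          (Fin.insertNth (α := fun _ => Q) p (x.1 p) y) (Fin.last n) = σ ∧ dim ((Fin.insertNth (α := fun _ => Q) p (x.1 p) y) 0) = 0
        rw [h]
        exact x.2.1⟩
      invFun := fun x => ⟨Fin.insertNth (α := fun _ => Q) p x.1 y, x.2, Fin.removeNth_insertNth (α := fun _ => Q) p x.1 y⟩
      left_inv := fun x => Subtype.ext (hins x.1 x.2.2)
      right_inv := fun x => Subtype.ext (Fin.insertNth_apply_same (α := fun _ => Q) p x.1 y) }
  rw [← Nat.card_eq_finsetCard]
  rw [Nat.card_congr ((Equiv.subtypeEquivRight (fun f => by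
      simp only [Finset.mem_filter, Finset.mem_univ, true_and])).trans e1)]
  rcases hpv : (p : ℕ) with _ | k
  · -- p = 0 : use hdiamond0
    have hn1 : 1 < n + 1 := by omega
    have hb : dim (f₀ ⟨1, hn1⟩) = 1 := hdim 1 hn1
    have hiff : ∀ γ : Q, ((List.ofFn (Fin.insertNth (α := fun _ => Q) p γ y)).IsChain cov ∧
        (Fin.insertNth (α := fun _ => Q) p γ y) (Fin.last n) = σ ∧ dim ((Fin.insertNth (α := fun _ => Q) p γ y) 0) = 0)
        ↔ cov γ (f₀ ⟨1, hn1⟩) := by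
      intro γ
      constructor
      · rintro ⟨hc, -, -⟩
        have hcv := (chain'_ofFn_iff cov (Fin.insertNth (α := fun _ => Q) p γ y)).1 hc 0 (by omega)
        have e0 : (Fin.insertNth (α := fun _ => Q) p γ y) ⟨0, by omega⟩ = γ := by
          rw [show (⟨0, by omega⟩ : Fin (n + 1)) = p from Fin.ext (by simp [hpv])]
          exact Fin.insertNth_apply_same (α := fun _ => Q) p γ y
        have e1' : (Fin.insertNth (α := fun _ => Q) p γ y) ⟨1, hn1⟩ = f₀ ⟨1, hn1⟩ :=
          hagree γ _ (Fin.ne_of_val_ne (by simp [hpv]))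
        rw [e0, e1'] at hcv
        exact hcv
      · intro hcov
        have hγ0 : dim γ = 0 := by
          have := hgrade γ _ hcov
          omega
        refine ⟨?_, ?_, ?_⟩
        · rw [chain'_ofFn_iff]
          intro j hj
          rcases j with _ | j'
          · have e0 : (Fin.insertNth (α := fun _ => Q) p γ y) ⟨0, by omega⟩ = γ := by
              rw [show (⟨0, by omega⟩ : Fin (n + 1)) = p from Fin.ext (by simp [hpv])]
              exact Fin.insertNth_apply_same (α := fun _ => Q) p γ y
            have e1' : (Fin.insertNth (α := fun _ => Q) p γ y) ⟨0 + 1, by omega⟩ = f₀ ⟨0 + 1, by omega⟩ :=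
              hagree γ _ (Fin.ne_of_val_ne (by simp [hpv]))
            rw [e0, e1']
            exact hcov
          · rw [hagree γ _ (Fin.ne_of_val_ne (by simp [hpv])),
              hagree γ _ (Fin.ne_of_val_ne (by simp [hpv]))]
            exact (chain'_ofFn_iff cov f₀).1 hc₀ (j' + 1) hj
        · rw [hagree γ _ (Fin.ne_of_val_ne (by simp [Fin.last, hpv] <;> omega))]
          exact hl₀
        · have e0 : (0 : Fin (n + 1)) = p := Fin.ext (by simp [hpv])
          rw [e0, Fin.insertNth_apply_same]
          exact hγ0
    rw [Nat.card_congr (Equiv.subtypeEquivRight hiff)]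
    exact hdiamond0 _ hb
  · -- p = k + 1 : use hdiamond
    have hk2 : k + 2 < n + 1 := by omega
    have hk1 : k + 1 < n + 1 := by omega
    have hk0 : k < n + 1 := by omega
    have hpmk : p = ⟨k + 1, hk1⟩ := Fin.ext hpv
    have h01 : cov (f₀ ⟨k, hk0⟩) (f₀ ⟨k + 1, hk1⟩) :=
      (chain'_ofFn_iff cov f₀).1 hc₀ k (by omega)
    have h12 : cov (f₀ ⟨k + 1, hk1⟩) (f₀ ⟨k + 2, hk2⟩) :=
      (chain'_ofFn_iff cov f₀).1 hc₀ (k + 1) (by omega)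
    have htrans : Relation.TransGen cov (f₀ ⟨k, hk0⟩) (f₀ ⟨k + 2, hk2⟩) :=
      Relation.TransGen.head h01 (Relation.TransGen.single h12)
    have hiff : ∀ γ : Q, ((List.ofFn (Fin.insertNth (α := fun _ => Q) p γ y)).IsChain cov ∧
        (Fin.insertNth (α := fun _ => Q) p γ y) (Fin.last n) = σ ∧ dim ((Fin.insertNth (α := fun _ => Q) p γ y) 0) = 0)
        ↔ (cov (f₀ ⟨k, hk0⟩) γ ∧ cov γ (f₀ ⟨k + 2, hk2⟩)) := by
      intro γ
      have emid : (Fin.insertNth (α := fun _ => Q) p γ y) ⟨k + 1, hk1⟩ = γ := by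
        rw [← hpmk]; exact Fin.insertNth_apply_same (α := fun _ => Q) p γ y
      constructor
      · rintro ⟨hc, -, -⟩
        have c1 := (chain'_ofFn_iff cov (Fin.insertNth (α := fun _ => Q) p γ y)).1 hc k (by omega)
        have c2 := (chain'_ofFn_iff cov (Fin.insertNth (α := fun _ => Q) p γ y)).1 hc (k + 1) (by omega)
        rw [emid, hagree γ _ (Fin.ne_of_val_ne (by simp [hpv] <;> omega))] at c1
        rw [emid, hagree γ _ (Fin.ne_of_val_ne (by simp [hpv] <;> omega))] at c2
        exact ⟨c1, c2⟩
      · rintro ⟨h1, h2⟩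
        refine ⟨?_, ?_, ?_⟩
        · rw [chain'_ofFn_iff]
          intro j hj
          by_cases hjk1 : j = k + 1
          · subst hjk1
            rw [emid, hagree γ _ (Fin.ne_of_val_ne (by simp [hpv] <;> omega))]
            exact h2
          · by_cases hjk : j = k
            · subst hjk
              rw [hagree γ _ (Fin.ne_of_val_ne (by simp [hpv] <;> omega)), emid]
              exact h1
            · rw [hagree γ _ (Fin.ne_of_val_ne (by simp [hpv] <;> omega)),
                hagree γ _ (Fin.ne_of_val_ne (by simp [hpv] <;> omega))]
              exact (chain'_ofFn_iff cov f₀).1 hc₀ j hj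
        · rw [hagree γ _ (Fin.ne_of_val_ne (by simp [Fin.last, hpv] <;> omega))]
          exact hl₀
        · rw [hagree γ _ (Fin.ne_of_val_ne (by simp [hpv]))]
          exact h0₀
    rw [Nat.card_congr (Equiv.subtypeEquivRight hiff)]
    exact hdiamond _ _ htrans (by rw [hdim k hk0, hdim (k + 2) hk2])

lemma middle_zero (hgrade : ∀ τ σ, cov τ σ → dim σ = dim τ + 1)
    (hdiamond : ∀ τ σ, Relation.TransGen cov τ σ → dim σ = dim τ + 2 →
        Nat.card {γ : Q // cov τ γ ∧ cov γ σ} = 2)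
    (hdiamond0 : ∀ σ, dim σ = 1 → Nat.card {γ : Q // cov γ σ} = 2)
    {n : ℕ} (σ : Q) (p : Fin (n + 1)) (hp : (p : ℕ) < n) :
    ∑ f : Fin (n + 1) → Q,
      (if (List.ofFn f).IsChain cov ∧ f (Fin.last n) = σ ∧ dim (f 0) = 0
       then Finsupp.single (List.ofFn (p.removeNth f)) (1 : ZMod 2) else 0) = 0 := by
  classical
  rw [← Finset.sum_filter]
  rw [show (∑ f ∈ Finset.univ.filter (fun f : Fin (n + 1) → Q =>
        (List.ofFn f).IsChain cov ∧ f (Fin.last n) = σ ∧ dim (f 0) = 0),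
        Finsupp.single (List.ofFn (p.removeNth f)) (1 : ZMod 2))
      = ∑ y : Fin n → Q, ∑ f ∈ (Finset.univ.filter (fun f : Fin (n + 1) → Q =>
        (List.ofFn f).IsChain cov ∧ f (Fin.last n) = σ ∧ dim (f 0) = 0)).filter
          (fun f => p.removeNth f = y),
        Finsupp.single (List.ofFn y) (1 : ZMod 2)
      from (Finset.sum_fiberwise' (Finset.univ.filter (fun f : Fin (n + 1) → Q =>
        (List.ofFn f).IsChain cov ∧ f (Fin.last n) = σ ∧ dim (f 0) = 0)) p.removeNth
        (fun y => Finsupp.single (List.ofFn y) (1 : ZMod 2))).symm]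
  apply Finset.sum_eq_zero
  intro y _
  rw [Finset.sum_const]
  rcases Finset.eq_empty_or_nonempty
      ((Finset.univ.filter fun f : Fin (n+1) → Q =>
        (List.ofFn f).IsChain cov ∧ f (Fin.last n) = σ ∧ dim (f 0) = 0).filter
        fun f => p.removeNth f = y) with h | ⟨f₀, hf₀⟩
  · rw [h]; simp
  · rw [Finset.filter_filter]
    rw [fiber_card cov dim hgrade hdiamond hdiamond0 σ p hp y f₀ (by
      simpa using hf₀)]
    have : ((2 : ℕ) • Finsupp.single (List.ofFn y) (1 : ZMod 2))
        = ((2 : ZMod 2) • Finsupp.single (List.ofFn y) (1 : ZMod 2)) :=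
      (Nat.cast_smul_eq_nsmul _ _ _).symm
    rw [this, show ((2 : ZMod 2)) = 0 by decide, zero_smul]

lemma lhs_eq (hgrade : ∀ τ σ, cov τ σ → dim σ = dim τ + 1) {s : ℕ} (σ : Q)
    (hσ : dim σ = s + 1) :
    (∑ τ : Q, if cov τ σ then sdOf cov dim τ else 0) =
      ∑ g : Fin (s + 1) → Q,
        if (List.ofFn g).IsChain cov ∧ cov (g (Fin.last s)) σ ∧ dim (g 0) = 0
        then Finsupp.single (List.ofFn g) (1 : ZMod 2) else 0 := by
  classical
  have step1 : ∀ τ : Q, (if cov τ σ then sdOf cov dim τ else 0) =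
      ∑ g : Fin (s + 1) → Q,
        if (List.ofFn g).IsChain cov ∧ g (Fin.last s) = τ ∧ cov τ σ ∧ dim (g 0) = 0
        then Finsupp.single (List.ofFn g) (1 : ZMod 2) else 0 := by
    intro τ
    by_cases h : cov τ σ
    · rw [if_pos h, sdOf_cast cov dim τ s (by have := hgrade τ σ h; omega)]
      refine Finset.sum_congr rfl fun g _ => ?_
      exact if_congr (by tauto) rfl rfl
    · rw [if_neg h]
      symm
      apply Finset.sum_eq_zero
      intro g _
      rw [if_neg]
      rintro ⟨_, _, hcov, _⟩
      exact h hcov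
  simp_rw [step1]
  rw [Finset.sum_comm]
  refine Finset.sum_congr rfl fun g _ => ?_
  have hpt : ∀ τ : Q,
      (if (List.ofFn g).IsChain cov ∧ g (Fin.last s) = τ ∧ cov τ σ ∧ dim (g 0) = 0
       then Finsupp.single (List.ofFn g) (1 : ZMod 2) else 0) =
      (if τ = g (Fin.last s) then
        (if (List.ofFn g).IsChain cov ∧ cov (g (Fin.last s)) σ ∧ dim (g 0) = 0
         then Finsupp.single (List.ofFn g) (1 : ZMod 2) else 0) else 0) := by
    intro τ
    by_cases hτ : τ = g (Fin.last s)
    · subst hτ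
      rw [if_pos rfl]
      exact if_congr (by tauto) rfl rfl
    · rw [if_neg hτ, if_neg]
      rintro ⟨_, hl, _⟩
      exact hτ hl.symm
  simp_rw [hpt]
  rw [Finset.sum_ite_eq' Finset.univ (g (Fin.last s))]
  simp

lemma last_term {s : ℕ} (σ : Q) :
    (∑ f : Fin (s + 2) → Q,
      if (List.ofFn f).IsChain cov ∧ f (Fin.last (s + 1)) = σ ∧ dim (f 0) = 0
      then Finsupp.single (List.ofFn ((Fin.last (s + 1)).removeNth f)) (1 : ZMod 2) else 0)
    = ∑ g : Fin (s + 1) → Q,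
        if (List.ofFn g).IsChain cov ∧ cov (g (Fin.last s)) σ ∧ dim (g 0) = 0
        then Finsupp.single (List.ofFn g) (1 : ZMod 2) else 0 := by
  classical
  rw [← Finset.sum_filter, ← Finset.sum_filter]
  refine Finset.sum_nbij' (fun f => Fin.init f) (fun g => Fin.snoc g σ) ?_ ?_ ?_ ?_ ?_
  · intro f hf
    simp only [Finset.mem_filter, Finset.mem_univ, true_and] at hf ⊢
    obtain ⟨hc, hl, h0⟩ := hf
    refine ⟨?_, ?_, ?_⟩
    · rw [chain'_ofFn_iff]
      intro j hj
      exact (chain'_ofFn_iff cov f).1 hc j (by omega)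
    · have := (chain'_ofFn_iff cov f).1 hc s (by omega)
      have hlast : f ⟨s + 1, by omega⟩ = σ := hl
      rw [← hlast]
      exact this
    · exact h0
  · intro g hg
    simp only [Finset.mem_filter, Finset.mem_univ, true_and] at hg ⊢
    obtain ⟨hc, hcov, h0⟩ := hg
    refine ⟨?_, ?_, ?_⟩
    · rw [chain'_ofFn_iff]
      intro j hj
      rcases Nat.lt_or_ge j s with hjs | hjs
      · have := (chain'_ofFn_iff cov g).1 hc j hjs
        have e1 : (⟨j, by omega⟩ : Fin (s + 2)) = Fin.castSucc ⟨j, by omega⟩ := rfl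
        have e2 : (⟨j + 1, by omega⟩ : Fin (s + 2)) = Fin.castSucc ⟨j + 1, by omega⟩ := rfl
        rw [e1, e2, Fin.snoc_castSucc, Fin.snoc_castSucc]
        exact this
      · have hjs' : j = s := by omega
        have e1 : (⟨j, by omega⟩ : Fin (s + 2)) = Fin.castSucc ⟨j, by omega⟩ := rfl
        have e2 : (⟨j + 1, by omega⟩ : Fin (s + 2)) = Fin.last (s + 1) :=
          Fin.ext (by simp [hjs'])
        rw [e1, e2, Fin.snoc_castSucc, Fin.snoc_last]
        have e3 : (⟨j, by omega⟩ : Fin (s + 1)) = Fin.last s := Fin.ext (by simp [hjs'])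
        rw [e3]
        exact hcov
    · exact Fin.snoc_last _ _
    · have e1 : (0 : Fin (s + 2)) = Fin.castSucc 0 := rfl
      rw [e1, Fin.snoc_castSucc]
      exact h0
  · intro f hf
    simp only [Finset.mem_filter, Finset.mem_univ, true_and] at hf
    rw [← hf.2.1]
    exact Fin.snoc_init_self f
  · intro g hg
    simp
  · intro f hf
    rw [Fin.removeNth_last]

lemma key (hgrade : ∀ τ σ, cov τ σ → dim σ = dim τ + 1)
    (hdiamond : ∀ τ σ, Relation.TransGen cov τ σ → dim σ = dim τ + 2 →
        Nat.card {γ : Q // cov τ γ ∧ cov γ σ} = 2)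
    (hdiamond0 : ∀ σ, dim σ = 1 → Nat.card {γ : Q // cov γ σ} = 2) (σ : Q) :
    sdMap cov dim (bdryCell cov (Finsupp.single σ 1)) = bdryChain (sdOf cov dim σ) := by
  classical
  obtain ⟨n, hn⟩ : ∃ n, dim σ = n := ⟨_, rfl⟩
  rw [bdryCell_single, sdMap_sum]
  simp only [apply_ite (sdMap cov dim), sdMap_single, sdMap_zero]
  rw [sdOf_cast cov dim σ n hn, bdryChain_sum]
  simp only [apply_ite bdryChain, bdryChain_zero, bdryChain_single, List.length_ofFn]
  cases n with
  | zero =>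
    rw [Finset.sum_eq_zero, Finset.sum_eq_zero]
    · intro f _
      split
      · simp
      · rfl
    · intro τ _
      rw [if_neg]
      intro hcov
      have := hgrade τ σ hcov
      omega
  | succ s =>
    have hone : ¬ (s + 1 + 1 ≤ 1) := by omega
    simp only [if_neg hone]
    have hpull : ∀ (P : Prop) [Decidable P] (t : ℕ → (List Q →₀ ZMod 2)),
        (if P then ∑ i ∈ Finset.range (s + 2), t i else 0)
          = ∑ i ∈ Finset.range (s + 2), if P then t i else 0 := by
      intro P _ t
      split
      · rfl
      · simp
    simp only [hpull]
    rw [Finset.sum_comm]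
    rw [← Fin.sum_univ_eq_sum_range (fun i =>
      ∑ f : Fin (s + 2) → Q,
        if (List.ofFn f).IsChain cov ∧ f (Fin.last (s + 1)) = σ ∧ dim (f 0) = 0
        then Finsupp.single ((List.ofFn f).eraseIdx i) (1 : ZMod 2) else 0) (s + 2)]
    simp only [eraseIdx_ofFn]
    rw [Fin.sum_univ_castSucc]
    rw [Finset.sum_eq_zero (fun i _ => middle_zero cov dim hgrade hdiamond hdiamond0 σ
      (Fin.castSucc i) (by simpa using i.isLt)), zero_add]
    rw [lhs_eq cov dim hgrade σ hn, last_term cov dim σ]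

end Main

/-- Over `𝔽₂`, for a finite graded poset (the face poset of a regular CW complex, with
covering relation `cov`, grading `dim`, cellular boundary squaring to zero, and the
diamond property — including at the bottom: every 1-cell covers exactly two 0-cells),
the barycentric subdivision map is a chain map: `sd ∘ ∂ = ∂ ∘ sd`. -/
theorem stmt16 {Q : Type} [Fintype Q] [DecidableEq Q] (cov : Q → Q → Prop)
    [DecidableRel cov] (dim : Q → ℕ)
    (hgrade : ∀ τ σ, cov τ σ → dim σ = dim τ + 1)
    (hd2 : ∀ x : Q →₀ ZMod 2, bdryCell cov (bdryCell cov x) = 0)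
    (hdiamond : ∀ τ σ, Relation.TransGen cov τ σ → dim σ = dim τ + 2 →
        Nat.card {γ : Q // cov τ γ ∧ cov γ σ} = 2)
    (hdiamond0 : ∀ σ, dim σ = 1 → Nat.card {γ : Q // cov γ σ} = 2) :
    ∀ x : Q →₀ ZMod 2, sdMap cov dim (bdryCell cov x) = bdryChain (sdMap cov dim x) := by
  intro x
  induction x using Finsupp.induction_linear with
  | zero => rw [bdryCell_zero, sdMap_zero, bdryChain_zero]
  | add f g hf hg =>
    rw [bdryCell_add, sdMap_add, sdMap_add, bdryChain_add, hf, hg]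
  | single a b =>
    rcases (by decide : ∀ r : ZMod 2, r = 0 ∨ r = 1) b with h | h
    · subst h
      rw [Finsupp.single_zero, bdryCell_zero, sdMap_zero, bdryChain_zero]
    · subst h
      rw [sdMap_single]
      exact key cov dim hgrade hdiamond hdiamond0 a

end
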